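/- Let R be a commutative ring, h_1,...,h_m an R-regular sequence, h = h_1⋯h_m, and let Ω be a free R-module (e.g. the module of Kähler differentials of a convergent power series ring). If ω ∈ h^{-1}Ω satisfies dh ∧ ω ∈ Ω in the exterior algebra over R localized at h, then for every i = 1,...,m one has dh_i ∧ ω ∈ (h_i/h)Ω. Conversely, if dh_i ∧ ω ∈ (h_i/h)Ω for all i, then dh ∧ ω ∈ Ω. Hence the two defining conditions of logarithmic differential forms along the product h agree. -/

import Mathlib

open ExteriorAlgebra

namespace SaitoAux

variable {R M ι : Type*} [CommRing R] [AddCommGroup M] [Module R M]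

section Mon
variable [LinearOrder ι] (b : Module.Basis ι R M)

/-- monomial attached to a list of indices -/
noncomputable def emon (l : List ι) : ExteriorAlgebra R M :=
  (l.map fun i => ExteriorAlgebra.ι R (b i)).prod

@[simp] lemma emon_nil : emon b ([] : List ι) = 1 := rfl

@[simp] lemma emon_cons (i : ι) (l : List ι) :
    emon b (i :: l) = ExteriorAlgebra.ι R (b i) * emon b l := by
  simp [emon]

lemma ι_swap (x y : M) :
    ExteriorAlgebra.ι R x * ExteriorAlgebra.ι R y
      = -(ExteriorAlgebra.ι R y * ExteriorAlgebra.ι R x) :=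
  eq_neg_of_add_eq_zero_left (ι_add_mul_swap x y)

lemma emon_mul_self (i : ι) (l : List ι) (hl : i ∈ l) :
    ExteriorAlgebra.ι R (b i) * emon b l = 0 := by
  induction l with
  | nil => simp at hl
  | cons j t ih =>
    rcases List.mem_cons.mp hl with rfl | hm
    · rw [emon_cons, ← mul_assoc, ι_sq_zero, zero_mul]
    · rw [emon_cons, ← mul_assoc, ι_swap (b i) (b j), neg_mul, mul_assoc, ih hm,
        mul_zero, neg_zero]

/-- insertion lemma -/
lemma emon_insert (l : List ι) (hl : l.Pairwise (· < ·)) (i : ι) (hi : i ∉ l) :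
    ∃ c : R, (c = 1 ∨ c = -1) ∧ ∃ l' : List ι, l'.Pairwise (· < ·) ∧ l'.Perm (i :: l) ∧
      ExteriorAlgebra.ι R (b i) * emon b l = c • emon b l' := by
  induction l with
  | nil =>
    exact ⟨1, Or.inl rfl, [i], List.pairwise_singleton _ i, List.Perm.refl _, by simp⟩
  | cons j t ih =>
    have hjt : ∀ x ∈ t, j < x := fun x hx => (List.pairwise_cons.mp hl).1 x hx
    have ht : t.Pairwise (· < ·) := (List.pairwise_cons.mp hl).2
    have hij : i ≠ j := fun h => hi (h ▸ List.mem_cons_self)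
    rcases lt_or_gt_of_ne hij with hlt | hgt
    · refine ⟨1, Or.inl rfl, i :: j :: t, ?_, List.Perm.refl _, by simp⟩
      exact List.pairwise_cons.mpr ⟨fun x hx => by
        rcases List.mem_cons.mp hx with rfl | hx
        · exact hlt
        · exact hlt.trans (hjt x hx), hl⟩
    · have hit : i ∉ t := fun h => hi (List.mem_cons_of_mem _ h)
      obtain ⟨c, hc, t', ht', hperm, heq⟩ := ih ht hit
      refine ⟨-c, ?_, j :: t', ?_, ?_, ?_⟩
      · rcases hc with rfl | rfl
        · exact Or.inr rfl
        · exact Or.inl (neg_neg 1)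
      · refine List.pairwise_cons.mpr ⟨fun x hx => ?_, ht'⟩
        rcases List.mem_cons.mp (hperm.mem_iff.mp hx) with rfl | hx
        · exact hgt
        · exact hjt x hx
      · exact (hperm.cons j).trans (List.Perm.swap i j t)
      · rw [emon_cons, emon_cons, ← mul_assoc, ι_swap (b i) (b j), neg_mul, mul_assoc,
          heq]
        rw [mul_smul_comm, neg_smul]

end Mon
section Span
variable [LinearOrder ι] (b : Module.Basis ι R M)

/-- monomial attached to a finset -/
noncomputable def emonS (S : Finset ι) : ExteriorAlgebra R M :=
  emon b (S.sort (· ≤ ·))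

lemma sort_toFinset (l : List ι) (hl : l.Pairwise (· < ·)) :
    l.toFinset.sort (· ≤ ·) = l := by
  have hnd : l.Nodup := hl.nodup
  refine List.Perm.eq_of_pairwise' (Finset.pairwise_sort _ _) (hl.imp le_of_lt) ?_
  rw [← Multiset.coe_eq_coe]
  have h1 : ((l.toFinset.sort (· ≤ ·) : List ι) : Multiset ι) = l.toFinset.val :=
    Finset.sort_eq _ _
  rw [h1]
  show (l.toFinset : Finset ι).val = (l : Multiset ι)
  rw [List.toFinset, Multiset.toFinset]
  exact Multiset.dedup_eq_self.mpr (Multiset.coe_nodup.mpr hnd)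

lemma emon_mem_range (l : List ι) (hl : l.Pairwise (· < ·)) :
    emon b l ∈ Set.range (emonS b) :=
  ⟨l.toFinset, by rw [emonS, sort_toFinset l hl]⟩

/-- the span of all monomials -/
noncomputable def monSpan : Submodule R (ExteriorAlgebra R M) :=
  Submodule.span R (Set.range (emonS b))

lemma one_mem_monSpan : 1 ∈ monSpan b :=
  Submodule.subset_span ⟨∅, by simp [emonS]⟩

lemma ι_basis_mul_emonS_mem (i : ι) (S : Finset ι) :
    ExteriorAlgebra.ι R (b i) * emonS b S ∈ monSpan b := by
  by_cases hi : i ∈ S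
  · rw [emonS, emon_mul_self b i _ (by simpa [Finset.mem_sort] using hi)]
    exact (monSpan b).zero_mem
  · obtain ⟨c, _, l', hl', _, heq⟩ := emon_insert b _ (Finset.sortedLT_sort S).pairwise i
      (by simpa [Finset.mem_sort] using hi)
    rw [emonS, heq]
    exact (monSpan b).smul_mem c (Submodule.subset_span (emon_mem_range b l' hl'))

lemma ι_mul_mem_monSpan (m : M) (x : ExteriorAlgebra R M) (hx : x ∈ monSpan b) :
    ExteriorAlgebra.ι R m * x ∈ monSpan b := by
  -- first reduce to basis vectors
  have key : ∀ i : ι, ∀ y ∈ monSpan b, ExteriorAlgebra.ι R (b i) * y ∈ monSpan b := by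
    intro i y hy
    refine Submodule.span_induction ?_ ?_ ?_ ?_ hy
    · rintro _ ⟨S, rfl⟩; exact ι_basis_mul_emonS_mem b i S
    · simp
    · intro u v _ _ hu hv; rw [mul_add]; exact (monSpan b).add_mem hu hv
    · intro r u _ hu; rw [mul_smul_comm]; exact (monSpan b).smul_mem r hu
  -- the set of m's for which the claim holds is a submodule containing the basis
  let N : Submodule R M :=
    { carrier := {m | ∀ y ∈ monSpan b, ExteriorAlgebra.ι R m * y ∈ monSpan b}
      add_mem' := by
        intro a c ha hc y hy
        rw [map_add, add_mul]
        exact (monSpan b).add_mem (ha y hy) (hc y hy)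
      zero_mem' := by intro y hy; simp
      smul_mem' := by
        intro r a ha y hy
        rw [map_smul, smul_mul_assoc]
        exact (monSpan b).smul_mem r (ha y hy) }
  have hN : ∀ m : M, m ∈ N := by
    intro m'
    have : (⊤ : Submodule R M) ≤ N := by
      rw [← b.span_eq]
      exact Submodule.span_le.mpr (by rintro _ ⟨i, rfl⟩; exact key i)
    exact this trivial
  exact hN m x hx

lemma mul_mem_monSpan (x y : ExteriorAlgebra R M)
    (hx : x ∈ monSpan b) (hy : y ∈ monSpan b) : x * y ∈ monSpan b := by
  have hlist : ∀ l : List ι, ∀ z ∈ monSpan b, emon b l * z ∈ monSpan b := by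
    intro l
    induction l with
    | nil => intro z hz; simpa using hz
    | cons i t ih =>
      intro z hz
      rw [emon_cons, mul_assoc]
      exact ι_mul_mem_monSpan b _ _ (ih z hz)
  refine Submodule.span_induction ?_ ?_ ?_ ?_ hx
  · rintro _ ⟨S, rfl⟩; exact hlist _ y hy
  · simp
  · intro u v _ _ hu hv; rw [add_mul]; exact (monSpan b).add_mem hu hv
  · intro r u _ hu; rw [smul_mul_assoc]; exact (monSpan b).smul_mem r hu

lemma monSpan_eq_top : monSpan b = ⊤ := by
  rw [Submodule.eq_top_iff']
  intro x
  induction x using CliffordAlgebra.induction with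
  | algebraMap r =>
    rw [Algebra.algebraMap_eq_smul_one]
    exact (monSpan b).smul_mem r (one_mem_monSpan b)
  | ι m =>
    have := ι_mul_mem_monSpan b m 1 (one_mem_monSpan b)
    simpa using this
  | mul x y hx hy => exact mul_mem_monSpan b x y hx hy
  | add x y hx hy => exact (monSpan b).add_mem hx hy

end Span

section Coord
variable [LinearOrder ι] (b : Module.Basis ι R M)

lemma emon_eq_ιMulti (l : List ι) :
    emon b l = ExteriorAlgebra.ιMulti R l.length (fun q => b (l.get q)) := by
  rw [ιMulti_apply, emon]
  have : l.map (fun i => ExteriorAlgebra.ι R (b i))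
      = List.ofFn ((fun i => ExteriorAlgebra.ι R (b i)) ∘ l.get) := by
    rw [← List.map_ofFn, List.ofFn_get]
  rw [this]
  rfl

/-- auxiliary alternating maps computing coordinates w.r.t. monomials -/
noncomputable def coordA (S : Finset ι) (n : ℕ) : M [⋀^Fin n]→ₗ[R] R :=
  if h : S.card = n then
    (Matrix.detRowAlternating).compLinearMap
      (LinearMap.pi fun p : Fin n =>
        Finsupp.lapply ((S.orderIsoOfFin h p : ι)) ∘ₗ (b.repr : M →ₗ[R] ι →₀ R))
  else 0

/-- coordinate functional w.r.t. the monomial basis -/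
noncomputable def coordFn (S : Finset ι) : ExteriorAlgebra R M →ₗ[R] R :=
  ExteriorAlgebra.liftAlternating (fun n => coordA b S n)

lemma coordA_apply_basis (S : Finset ι) (n : ℕ) (g : Fin n → ι) :
    coordA b S n (fun q => b (g q))
      = if h : S.card = n then
          Matrix.det (fun q p : Fin n =>
            if g q = (S.orderIsoOfFin h p : ι) then (1 : R) else 0)
        else 0 := by
  rw [coordA]
  split
  · next h =>
    rw [AlternatingMap.compLinearMap_apply, Matrix.detRowAlternating]
    congr 1
    funext q p
    simp [Finsupp.single_apply]
    exact if_congr Iff.rfl rfl rfl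
  · rfl

lemma coordFn_emonS (S T : Finset ι) :
    coordFn b S (emonS b T) = if S = T then 1 else 0 := by
  rw [emonS, emon_eq_ιMulti, coordFn, ExteriorAlgebra.liftAlternating_apply_ιMulti,
    coordA_apply_basis]
  by_cases hST' : S = T
  · subst hST'
    have hpf : S.card = (S.sort (· ≤ ·)).length := (Finset.length_sort _).symm
    rw [if_pos rfl, dif_pos hpf]
    have hmat : (fun q p : Fin (S.sort (· ≤ ·)).length =>
        if (S.sort (· ≤ ·)).get q = (S.orderIsoOfFin hpf p : ι) then (1 : R) else 0)
        = (1 : Matrix (Fin (S.sort (· ≤ ·)).length) (Fin (S.sort (· ≤ ·)).length) R) := by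
      funext q p
      have hidx : (S.orderIsoOfFin hpf p : ι) = (S.sort (· ≤ ·)).get p := rfl
      rw [Matrix.one_apply, hidx]
      exact if_congr ((S.sort_nodup (· ≤ ·)).get_inj_iff) rfl rfl
    rw [hmat, Matrix.det_one]
  · rw [if_neg hST']
    by_cases hc : S.card = (T.sort (· ≤ ·)).length
    · rw [dif_pos hc]
      have hcard : T.card ≤ S.card := by rw [hc, Finset.length_sort]
      have hns : ¬ S ⊆ T := fun hsub =>
        hST' (Finset.eq_of_subset_of_card_le hsub (by
          rw [hc, Finset.length_sort]))
      obtain ⟨s, hsS, hsT⟩ := Finset.not_subset.mp hns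
      refine Matrix.det_eq_zero_of_column_eq_zero ((S.orderIsoOfFin hc).symm ⟨s, hsS⟩)
        (fun q => ?_)
      rw [if_neg]
      intro hq
      apply hsT
      have : (S.orderIsoOfFin hc ((S.orderIsoOfFin hc).symm ⟨s, hsS⟩) : ι) = s := by
        rw [OrderIso.apply_symm_apply]
      rw [this] at hq
      rw [← hq]
      exact (Finset.mem_sort (· ≤ ·)).mp (List.get_mem _ _)
    · rw [dif_neg hc]

end Coord

section Torsion
variable [LinearOrder ι] (b : Module.Basis ι R M)

lemma coordFn_finsupp_sum (S : Finset ι) (c : Finset ι →₀ R) :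
    coordFn b S (c.sum fun T r => r • emonS b T) = c S := by
  rw [map_finsuppSum, Finsupp.sum]
  have : ∀ T ∈ c.support, coordFn b S (c T • emonS b T)
      = if T = S then c T else 0 := by
    intro T _
    rw [map_smul, coordFn_emonS, smul_eq_mul]
    by_cases hST : S = T
    · subst hST; simp
    · rw [if_neg hST, if_neg (fun h => hST h.symm), mul_zero]
  rw [Finset.sum_congr rfl this, Finset.sum_ite_eq' c.support S (fun T => c T)]
  split
  · rfl
  · next hS => exact (Finsupp.notMem_support_iff.mp hS).symm

lemma exists_repr (x : ExteriorAlgebra R M) :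
    ∃ c : Finset ι →₀ R, (c.sum fun T r => r • emonS b T) = x := by
  have hx : x ∈ Submodule.span R (Set.range (emonS b)) := by
    rw [← monSpan]
    rw [monSpan_eq_top]
    trivial
  exact Finsupp.mem_span_range_iff_exists_finsupp.mp hx

/-- torsion-freeness substitute: Wiebe-type divisibility in the exterior algebra -/
theorem smul_torsion {ι : Type*} [LinearOrder ι] (b : Module.Basis ι R M) (a u : R)
    (hu : ∀ r : R, a * r ∈ Ideal.span {u} → r ∈ Ideal.span {u})
    (x y : ExteriorAlgebra R M) (hxy : a • x = u • y) :
    ∃ z : ExteriorAlgebra R M, x = u • z := by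
  obtain ⟨c, hc⟩ := exists_repr b x
  obtain ⟨d, hd⟩ := exists_repr b y
  have hdvd : ∀ S : Finset ι, u ∣ c S := by
    intro S
    have h1 : coordFn b S (a • x) = a * c S := by
      rw [map_smul, ← hc, coordFn_finsupp_sum, smul_eq_mul]
    have h2 : coordFn b S (u • y) = u * d S := by
      rw [map_smul, ← hd, coordFn_finsupp_sum, smul_eq_mul]
    have h3 : a * c S ∈ Ideal.span {u} := by
      rw [← h1, hxy, h2]
      exact Ideal.mem_span_singleton.mpr ⟨d S, rfl⟩
    exact Ideal.mem_span_singleton.mp (hu _ h3)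
  choose e he using hdvd
  refine ⟨∑ S ∈ c.support, e S • emonS b S, ?_⟩
  rw [Finset.smul_sum, ← hc, Finsupp.sum]
  refine Finset.sum_congr rfl (fun S _ => ?_)
  rw [he S, smul_smul, mul_comm]

end Torsion

/-- Wiebe-type divisibility for the exterior algebra of a free module -/
theorem smul_torsion_free [Module.Free R M] (a u : R)
    (hu : ∀ r : R, a * r ∈ Ideal.span {u} → r ∈ Ideal.span {u})
    (x y : ExteriorAlgebra R M) (hxy : a • x = u • y) :
    ∃ z : ExteriorAlgebra R M, x = u • z := by
  letI : LinearOrder (Module.Free.ChooseBasisIndex R M) :=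
    IsWellOrder.linearOrder WellOrderingRel
  exact smul_torsion (Module.Free.chooseBasis R M) a u hu x y hxy

/-- Leibniz rule for finite products -/
lemma Derivation.finset_prod {k A N : Type*} [CommRing k] [CommRing A] [Algebra k A]
    [AddCommGroup N] [Module A N] [Module k N] [IsScalarTower k A N]
    (d : Derivation k A N) {σ : Type*} [DecidableEq σ] (s : Finset σ) (f : σ → A) :
    d (∏ i ∈ s, f i) = ∑ i ∈ s, (∏ j ∈ s.erase i, f j) • d (f i) := by
  induction s using Finset.induction_on with
  | empty => simp
  | insert _ _ ha _ =>
    next a s ih =>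
    rw [Finset.prod_insert ha, Derivation.leibniz, ih, Finset.sum_insert ha,
      Finset.erase_insert ha, Finset.smul_sum]
    rw [add_comm]
    congr 1
    refine Finset.sum_congr rfl (fun i hi => ?_)
    have hia : i ≠ a := fun hh => ha (hh ▸ hi)
    rw [Finset.erase_insert_of_ne hia.symm, Finset.prod_insert (fun hh => ha (Finset.mem_of_mem_erase hh)),
      smul_smul]

section RegSeq
variable {m : ℕ} (h : Fin m → R)

open RingTheory.Sequence

lemma pair_nzd [IsLocalRing R] [IsNoetherianRing R]
    (hreg : IsRegular R (List.ofFn h)) {i j : Fin m} (hij : j ≠ i)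
    (r : R) (hr : h j * r ∈ Ideal.span {h i}) : r ∈ Ideal.span {h i} := by
  have h2 : 1 < m := by
    rcases Nat.lt_or_ge 1 m with hh | hh
    · exact hh
    · exact absurd (Fin.ext (by omega)) hij
  obtain ⟨m', rfl⟩ : ∃ m', m = m' + 2 := ⟨m - 2, by omega⟩
  set z0 : Fin (m' + 2) := 0 with hz0
  set z1 : Fin (m' + 2) := 1 with hz1
  have hz01 : z0 ≠ z1 := by simp [hz0, hz1, Fin.ext_iff]
  set τ : Equiv.Perm (Fin (m' + 2)) := Equiv.swap z0 i with hτ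
  set j' : Fin (m' + 2) := τ.symm j with hj'
  have hz0j' : z0 ≠ j' := by
    intro hh
    apply hij
    rw [hj'] at hh
    have := congrArg τ hh
    rw [Equiv.apply_symm_apply] at this
    rw [← this, hτ, Equiv.swap_apply_left]
  set s : Equiv.Perm (Fin (m' + 2)) := (Equiv.swap z1 j').trans τ with hs
  have hs0 : s z0 = i := by
    rw [hs, Equiv.trans_apply, Equiv.swap_apply_of_ne_of_ne hz01 hz0j', hτ,
      Equiv.swap_apply_left]
  have hs1 : s z1 = j := by
    rw [hs, Equiv.trans_apply, Equiv.swap_apply_left, hj', Equiv.apply_symm_apply]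
  have hperm : (List.ofFn (h ∘ s)).Perm (List.ofFn h) := Equiv.Perm.ofFn_comp_perm s h
  have hreg' : IsRegular R (List.ofFn (h ∘ s)) :=
    IsLocalRing.isRegular_of_perm hreg hperm.symm
  have hw := hreg'.toIsWeaklyRegular
  rw [isWeaklyRegular_iff_Fin] at hw
  have hlen : (List.ofFn (h ∘ s)).length = m' + 2 := List.length_ofFn
  -- compute the list data
  have hofn : List.ofFn (h ∘ s) = h (s z0) :: h (s z1) :: List.ofFn (fun p : Fin m' => h (s p.succ.succ)) := by
    rw [List.ofFn_succ, List.ofFn_succ]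
    rfl
  have hg : (List.ofFn (h ∘ s))[(1 : ℕ)]'(by rw [hlen]; omega) = h j := by
    simp only [hofn, List.getElem_cons_succ, List.getElem_cons_zero]
    rw [hs1]
  have ht' : Ideal.ofList ((List.ofFn (h ∘ s)).take 1) = Ideal.ofList [h i] := by
    rw [hofn]
    simp only [List.take_succ_cons, List.take_zero]
    rw [hs0]
  have hw1 : IsSMulRegular (R ⧸ (Ideal.ofList [h i] • ⊤ : Submodule R R)) (h j) := by
    have hw1' := hw ⟨1, by rw [hlen]; omega⟩
    simp only [Fin.getElem_fin] at hw1'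
    rwa [hg, ht'] at hw1'
  -- hw1 : IsSMulRegular (R ⧸ (Ideal.ofList [h i] • ⊤)) (h j)
  have hN : (Ideal.ofList [h i] • ⊤ : Submodule R R) = Ideal.span {h i} := by
    rw [Ideal.ofList_singleton, Ideal.smul_top_eq_map]
    ext x
    simp [Submodule.mem_map, Algebra.linearMap_apply, Submodule.restrictScalars_mem]
  have e1 : h j • (Submodule.Quotient.mk r :
      R ⧸ (Ideal.ofList [h i] • ⊤ : Submodule R R)) = 0 := by
    rw [← Submodule.Quotient.mk_smul (Ideal.ofList [h i] • ⊤ : Submodule R R) (h j) r,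
      Submodule.Quotient.mk_eq_zero, hN]
    simpa [smul_eq_mul] using hr
  have e2 : (Submodule.Quotient.mk r :
      R ⧸ (Ideal.ofList [h i] • ⊤ : Submodule R R)) = Submodule.Quotient.mk 0 :=
    hw1 (by simpa using e1)
  rw [← hN]
  have := (Submodule.Quotient.eq _).mp e2
  simpa using this

lemma prod_nzd [IsLocalRing R] [IsNoetherianRing R]
    (hreg : RingTheory.Sequence.IsRegular R (List.ofFn h)) (i : Fin m)
    (s : Finset (Fin m)) (his : i ∉ s) :
    ∀ r : R, (∏ j ∈ s, h j) * r ∈ Ideal.span {h i} → r ∈ Ideal.span {h i} := by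
  induction s using Finset.induction_on with
  | empty => intro r hr; simpa using hr
  | insert _ _ ha _ =>
    next a s ih =>
    intro r hr
    have hai : a ≠ i := fun hh => his (hh ▸ Finset.mem_insert_self a s)
    have his' : i ∉ s := fun hh => his (Finset.mem_insert_of_mem hh)
    rw [Finset.prod_insert ha, mul_assoc] at hr
    exact ih his' r (pair_nzd h hreg hai _ hr)

end RegSeq

end SaitoAux

open scoped TensorProduct

/-- **Saito's normal crossing condition, Definition 92 / Remark 25(1)** (Schulze).
Let `R` be a commutative (local Noetherian, e.g. convergent power series) `k`-algebra,
`h 0, …, h (m-1)` an `R`-regular sequence with product `H`, and let the exterior algebra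
`E = Λ Ω_{R/k}` of Kähler differentials be free over `R` (e.g. `Ω_{R/k}` free).
For `ω = η / H ∈ H⁻¹ E`, the condition `dH ∧ ω ∈ E` (i.e. `dH ∧ η ∈ H·E`)
holds if and only if `dhᵢ ∧ ω ∈ (hᵢ/H)·E` (i.e. `dhᵢ ∧ η ∈ hᵢ·E`) for all `i`.
Hence the two defining conditions of logarithmic differential forms along `⟨H⟩` agree. -/
theorem saito_log_forms_product_characterization
    (k R : Type*) [CommRing k] [CommRing R] [Algebra k R]
    [IsLocalRing R] [IsNoetherianRing R]
    (m : ℕ) (h : Fin m → R)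
    (hreg : RingTheory.Sequence.IsRegular R (List.ofFn h))
    [Module.Free R (KaehlerDifferential k R)]
    (η : ExteriorAlgebra R (KaehlerDifferential k R)) :
    (∃ ξ : ExteriorAlgebra R (KaehlerDifferential k R),
        ExteriorAlgebra.ι R (KaehlerDifferential.D k R (∏ i, h i)) * η = (∏ i, h i) • ξ)
      ↔ (∀ i : Fin m, ∃ ξ : ExteriorAlgebra R (KaehlerDifferential k R),
        ExteriorAlgebra.ι R (KaehlerDifferential.D k R (h i)) * η = h i • ξ) := by
  classical
  set D := KaehlerDifferential.D k R with hDdef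
  set x : Fin m → ExteriorAlgebra R (KaehlerDifferential k R) :=
    fun i => ExteriorAlgebra.ι R (D (h i)) * η with hx
  have hkey : ExteriorAlgebra.ι R (D (∏ i, h i)) * η
      = ∑ i, (∏ j ∈ Finset.univ.erase i, h j) • x i := by
    rw [SaitoAux.Derivation.finset_prod D Finset.univ h, map_sum, Finset.sum_mul]
    refine Finset.sum_congr rfl (fun i _ => ?_)
    rw [map_smul, smul_mul_assoc]
  constructor
  · rintro ⟨ξ, hξ⟩ i
    rw [hkey] at hξ
    have hmem : i ∈ Finset.univ := Finset.mem_univ i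
    have htotal : (∏ j ∈ Finset.univ.erase i, h j) • x i
          + ∑ j ∈ Finset.univ.erase i, (∏ l ∈ Finset.univ.erase j, h l) • x j
        = (∏ l, h l) • ξ := by
      rw [← hξ]
      exact Finset.add_sum_erase _ (fun j => (∏ l ∈ Finset.univ.erase j, h l) • x j) hmem
    have hsplit : (∏ j ∈ Finset.univ.erase i, h j) • x i
        = h i • (((∏ j ∈ Finset.univ.erase i, h j) • ξ)
        - ∑ j ∈ Finset.univ.erase i, (∏ l ∈ (Finset.univ.erase j).erase i, h l) • x j) := by
      rw [smul_sub, Finset.smul_sum]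
      have h1 : h i • ((∏ j ∈ Finset.univ.erase i, h j) • ξ) = (∏ l, h l) • ξ := by
        rw [smul_smul, Finset.mul_prod_erase _ _ hmem]
      have h2 : ∀ j ∈ Finset.univ.erase i,
          h i • ((∏ l ∈ (Finset.univ.erase j).erase i, h l) • x j)
            = (∏ l ∈ Finset.univ.erase j, h l) • x j := by
        intro j hj
        have hij : i ∈ Finset.univ.erase j := by
          rw [Finset.mem_erase] at hj ⊢
          exact ⟨fun hh => hj.1 hh.symm, Finset.mem_univ i⟩
        rw [smul_smul, Finset.mul_prod_erase _ _ hij]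
      rw [Finset.sum_congr rfl h2, h1, ← htotal]
      abel
    have hu : ∀ r : R, (∏ j ∈ Finset.univ.erase i, h j) * r ∈ Ideal.span {h i}
        → r ∈ Ideal.span {h i} :=
      SaitoAux.prod_nzd h hreg i (Finset.univ.erase i) (Finset.notMem_erase i _)
    obtain ⟨z, hz⟩ := SaitoAux.smul_torsion_free (∏ j ∈ Finset.univ.erase i, h j) (h i)
      hu (x i) _ hsplit
    exact ⟨z, hz⟩
  · intro hi
    choose ξ hξ using hi
    refine ⟨∑ i, ξ i, ?_⟩
    rw [hkey, Finset.smul_sum]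
    have hx' : ∀ i, x i = h i • ξ i := fun i => hξ i
    refine Finset.sum_congr rfl (fun i _ => ?_)
    rw [hx' i, smul_smul, Finset.prod_erase_mul _ _ (Finset.mem_univ i)]
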